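/- If an eligibility-complying matching μ admits an even alternating chain with positive potential, then μ is not max-in-max: augmenting the chain yields an eligibility-complying matching of the same cardinality with strictly more beneficiary assignments. -/
import Mathlib


open scoped Classical

variable {ι κ : Type*} [Fintype ι] [Fintype κ]

/-- Number of patients matched to category `c` under matching `μ`. -/
noncomputable def matchCount (μ : ι → Option κ) (c : κ) : ℕ :=
  (Finset.univ.filter fun i => μ i = some c).card

/-- Number of matched patients under `μ`. -/
noncomputable def matchedCard (μ : ι → Option κ) : ℕ :=
  (Finset.univ.filter fun i => μ i ≠ none).card

/-- Number of patients matched to a category of which they are a beneficiary. -/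
noncomputable def benefCard (B : κ → Finset ι) (μ : ι → Option κ) : ℕ :=
  (Finset.univ.filter fun i => ∃ c, μ i = some c ∧ i ∈ B c).card

/-- `μ` respects the capacity (reserve) of every category. -/
def Caps (r : κ → ℕ) (μ : ι → Option κ) : Prop :=
  ∀ c, matchCount μ c ≤ r c

/-- `μ` complies with eligibility requirements. -/
def Complies (E : κ → Finset ι) (μ : ι → Option κ) : Prop :=
  ∀ i c, μ i = some c → i ∈ E c

/-- `μ` is a feasible eligibility-complying matching. -/
def Valid (r : κ → ℕ) (E : κ → Finset ι) (μ : ι → Option κ) : Prop :=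
  Caps r μ ∧ Complies E μ

/-- `μ` is maximal in resource allocation. -/
def MaxRes (r : κ → ℕ) (E : κ → Finset ι) (μ : ι → Option κ) : Prop :=
  Valid r E μ ∧ ∀ μ', Valid r E μ' → matchedCard μ' ≤ matchedCard μ

/-- `μ` is max-in-max: maximal in resource allocation and maximizing beneficiary
assignments among such matchings. -/
def MaxInMax (r : κ → ℕ) (E B : κ → Finset ι) (μ : ι → Option κ) : Prop :=
  MaxRes r E μ ∧ ∀ μ', MaxRes r E μ' → benefCard B μ' ≤ benefCard B μ
/-- `(i 0, c 0, i 1, c 1, …, c (m-1), i m)` is an even alternating chain in `μ`: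
either `i 0` is unmatched or the chain is a cycle (`i 0 = i m`); each `i (k-1)` is
eligible for `c k`; each `i k` is matched to `c k`; and the patients are distinct
(except possibly the two endpoints of a cycle). -/
def IsEvenChain (E : κ → Finset ι) (μ : ι → Option κ) {m : ℕ}
    (i : Fin (m + 1) → ι) (c : Fin m → κ) : Prop :=
  (μ (i 0) = none ∨ i 0 = i (Fin.last m)) ∧
  (∀ k : Fin m, i k.castSucc ∈ E (c k)) ∧
  (∀ k : Fin m, μ (i k.succ) = some (c k)) ∧
  (∀ k l : Fin (m + 1), i k = i l →
    k = l ∨ (k = 0 ∧ l = Fin.last m) ∨ (l = 0 ∧ k = Fin.last m))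

/-- The potential of an alternating chain. -/
noncomputable def potential (B : κ → Finset ι) {m : ℕ}
    (i : Fin (m + 1) → ι) (c : Fin m → κ) : ℤ :=
  ((Finset.univ.filter fun k : Fin m => i k.castSucc ∈ B (c k)).card : ℤ) -
    ((Finset.univ.filter fun k : Fin m => i k.succ ∈ B (c k)).card : ℤ)

/-- `μ'` is the matching obtained from `μ` by augmenting the chain `(i, c)`. -/
def Augments (μ μ' : ι → Option κ) {m : ℕ}
    (i : Fin (m + 1) → ι) (c : Fin m → κ) : Prop :=
  (∀ k : Fin m, μ' (i k.castSucc) = some (c k)) ∧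
  (i 0 ≠ i (Fin.last m) → μ' (i (Fin.last m)) = none) ∧
  (∀ j, (∀ k, j ≠ i k) → μ' j = μ j)

/-! ### Auxiliary machinery -/

section Aux

lemma filter_irrel {α : Type*} (s : Finset α) (p : α → Prop) (h1 h2 : DecidablePred p) :
    @Finset.filter α p h1 s = @Finset.filter α p h2 s := by
  have he : h1 = h2 := by funext a; exact Subsingleton.elim _ _
  rw [he]

lemma card_filter_split (T : Finset ι) (q : ι → Prop) [DecidablePred q] :
    (Finset.univ.filter q).card = (T.filter q).card + (Tᶜ.filter q).card := by
  rw [← Finset.card_union_of_disjoint (Finset.disjoint_filter_filter disjoint_compl_right),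
    ← Finset.filter_union, Finset.union_compl]

variable {m : ℕ} {i : Fin (m + 1) → ι} {c : Fin m → κ}

/-- Distinctness hypothesis abbreviation. -/
def ChainDist (i : Fin (m + 1) → ι) : Prop :=
  ∀ k l : Fin (m + 1), i k = i l →
    k = l ∨ (k = 0 ∧ l = Fin.last m) ∨ (l = 0 ∧ k = Fin.last m)

lemma chain_succ_inj (hdist : ChainDist i) {k l : Fin m} (h : i k.succ = i l.succ) : k = l := by
  rcases hdist _ _ h with h' | ⟨h', -⟩ | ⟨h', -⟩
  · exact Fin.succ_injective _ h'
  · exact absurd h' (Fin.succ_ne_zero k)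
  · exact absurd h' (Fin.succ_ne_zero l)

lemma chain_castSucc_inj (hdist : ChainDist i) {k l : Fin m}
    (h : i k.castSucc = i l.castSucc) : k = l := by
  rcases hdist _ _ h with h' | ⟨-, h'⟩ | ⟨-, h'⟩
  · exact Fin.castSucc_injective _ h'
  · exact absurd h' (Fin.castSucc_lt_last l).ne
  · exact absurd h' (Fin.castSucc_lt_last k).ne

lemma last_ne_zero (hm : 0 < m) : (Fin.last m) ≠ (0 : Fin (m + 1)) := by
  simp [Fin.ext_iff, hm.ne']

/-- Counting the chain part of a matching `μ` containing the chain (succ side). -/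
lemma chain_card_succ (hm : 0 < m) (μ : ι → Option κ)
    (h0 : μ (i 0) = none ∨ i 0 = i (Fin.last m))
    (hmat : ∀ k : Fin m, μ (i k.succ) = some (c k))
    (hdist : ChainDist i) (p : ι → κ → Prop) :
    ((Finset.image i Finset.univ).filter fun j => ∃ c0, μ j = some c0 ∧ p j c0).card
      = (Finset.univ.filter fun k : Fin m => p (i k.succ) (c k)).card := by
  symm
  apply Finset.card_bij (fun k _ => i k.succ)
  · intro k hk
    simp only [Finset.mem_filter, Finset.mem_univ, true_and] at hk ⊢
    exact ⟨Finset.mem_image_of_mem i (Finset.mem_univ _), c k, hmat k, hk⟩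
  · intro k _ l _ h
    exact chain_succ_inj hdist h
  · intro j hj
    simp only [Finset.mem_filter, Finset.mem_image] at hj
    obtain ⟨⟨l, -, hl⟩, c0, hc0, hp⟩ := hj
    have hex : ∃ l' : Fin (m + 1), l' ≠ 0 ∧ i l' = j := by
      by_cases h : l = 0
      · subst h
        rcases h0 with h0 | h0
        · rw [hl] at h0; rw [h0] at hc0; exact absurd hc0 (by simp)
        · exact ⟨Fin.last m, last_ne_zero hm, by rw [← h0, hl]⟩
      · exact ⟨l, h, hl⟩
    obtain ⟨l', hl0, hl'⟩ := hex
    obtain ⟨k, hk⟩ := Fin.exists_succ_eq.mpr hl0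
    have hjk : i k.succ = j := by rw [hk]; exact hl'
    have hck : c0 = c k := by
      have h' := hmat k
      rw [hjk, hc0] at h'
      exact Option.some_injective _ h'
    refine ⟨k, Finset.mem_filter.mpr ⟨Finset.mem_univ _, ?_⟩, hjk⟩
    rw [hjk, ← hck]; exact hp

/-- Counting the chain part of the augmented matching `μ'` (castSucc side). -/
lemma chain_card_castSucc (hm : 0 < m) (μ' : ι → Option κ)
    (hmat' : ∀ k : Fin m, μ' (i k.castSucc) = some (c k))
    (hnone : i 0 ≠ i (Fin.last m) → μ' (i (Fin.last m)) = none)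
    (hdist : ChainDist i) (p : ι → κ → Prop) :
    ((Finset.image i Finset.univ).filter fun j => ∃ c0, μ' j = some c0 ∧ p j c0).card
      = (Finset.univ.filter fun k : Fin m => p (i k.castSucc) (c k)).card := by
  symm
  apply Finset.card_bij (fun k _ => i k.castSucc)
  · intro k hk
    simp only [Finset.mem_filter, Finset.mem_univ, true_and] at hk ⊢
    exact ⟨Finset.mem_image_of_mem i (Finset.mem_univ _), c k, hmat' k, hk⟩
  · intro k _ l _ h
    exact chain_castSucc_inj hdist h
  · intro j hj
    simp only [Finset.mem_filter, Finset.mem_image] at hj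
    obtain ⟨⟨l, -, hl⟩, c0, hc0, hp⟩ := hj
    have hex : ∃ l' : Fin (m + 1), l' ≠ Fin.last m ∧ i l' = j := by
      by_cases h : l = Fin.last m
      · subst h
        by_cases hcy : i 0 = i (Fin.last m)
        · exact ⟨0, (last_ne_zero hm).symm, by rw [hcy, hl]⟩
        · have hn := hnone hcy
          rw [hl] at hn
          rw [hn] at hc0
          exact absurd hc0 (by simp)
      · exact ⟨l, h, hl⟩
    obtain ⟨l', hl0, hl'⟩ := hex
    obtain ⟨k, hk⟩ := Fin.exists_castSucc_eq.mpr hl0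
    have hjk : i k.castSucc = j := by rw [hk]; exact hl'
    have hck : c0 = c k := by
      have h' := hmat' k
      rw [hjk, hc0] at h'
      exact Option.some_injective _ h'
    refine ⟨k, Finset.mem_filter.mpr ⟨Finset.mem_univ _, ?_⟩, hjk⟩
    rw [hjk, ← hck]; exact hp

/-- The master counting identity. -/
lemma chain_count (hm : 0 < m) (μ μ' : ι → Option κ)
    (h0 : μ (i 0) = none ∨ i 0 = i (Fin.last m))
    (hmat : ∀ k : Fin m, μ (i k.succ) = some (c k))
    (hmat' : ∀ k : Fin m, μ' (i k.castSucc) = some (c k))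
    (hnone : i 0 ≠ i (Fin.last m) → μ' (i (Fin.last m)) = none)
    (hout : ∀ j, (∀ k, j ≠ i k) → μ' j = μ j)
    (hdist : ChainDist i) (p : ι → κ → Prop) :
    (Finset.univ.filter fun j => ∃ c0, μ' j = some c0 ∧ p j c0).card
        + (Finset.univ.filter fun k : Fin m => p (i k.succ) (c k)).card
      = (Finset.univ.filter fun j => ∃ c0, μ j = some c0 ∧ p j c0).card
        + (Finset.univ.filter fun k : Fin m => p (i k.castSucc) (c k)).card := by
  set T := Finset.image i Finset.univ with hT
  have hcompl : (Tᶜ.filter fun j => ∃ c0, μ' j = some c0 ∧ p j c0)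
      = Tᶜ.filter fun j => ∃ c0, μ j = some c0 ∧ p j c0 := by
    apply Finset.filter_congr
    intro j hj
    have hj' : ∀ k, j ≠ i k := by
      intro k hk
      exact Finset.mem_compl.mp hj (by rw [hk]; exact Finset.mem_image_of_mem i (Finset.mem_univ k))
    rw [hout j hj']
  rw [card_filter_split T (fun j => ∃ c0, μ' j = some c0 ∧ p j c0),
    card_filter_split T (fun j => ∃ c0, μ j = some c0 ∧ p j c0),
    hcompl, chain_card_castSucc hm μ' hmat' hnone hdist p,
    chain_card_succ hm μ h0 hmat hdist p]
  omega

end Aux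


/-- The augmented matching. -/
noncomputable def augMatch (μ : ι → Option κ) {m : ℕ}
    (i : Fin (m + 1) → ι) (c : Fin m → κ) : ι → Option κ :=
  fun j =>
    if h : ∃ k : Fin m, j = i k.castSucc then some (c h.choose)
    else if j = i (Fin.last m) then none else μ j

theorem chain_not_maxInMax (r : κ → ℕ) (E B : κ → Finset ι) (hBE : ∀ c, B c ⊆ E c)
    (μ : ι → Option κ) (hμ : Valid r E μ) (m : ℕ) (hm : 0 < m)
    (i : Fin (m + 1) → ι) (c : Fin m → κ)
    (hch : IsEvenChain E μ i c) (hΦ : 0 < potential B i c) :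
    (∃ μ', Augments μ μ' i c ∧ Valid r E μ' ∧ matchedCard μ' = matchedCard μ ∧
      benefCard B μ < benefCard B μ') ∧
    ¬ MaxInMax r E B μ := by
  obtain ⟨h0, helig, hmat, hdist'⟩ := hch
  have hdist : ChainDist i := hdist'
  set μ' := augMatch μ i c with hμ'def
  -- Augments properties
  have hmat' : ∀ k : Fin m, μ' (i k.castSucc) = some (c k) := by
    intro k
    have hex : ∃ k' : Fin m, i k.castSucc = i (Fin.castSucc k') := ⟨k, rfl⟩
    have : μ' (i k.castSucc) = some (c hex.choose) := by
      rw [hμ'def]; unfold augMatch; exact dif_pos hex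
    rw [this, chain_castSucc_inj hdist hex.choose_spec.symm]
  have hnone : i 0 ≠ i (Fin.last m) → μ' (i (Fin.last m)) = none := by
    intro hne
    have hnex : ¬ ∃ k : Fin m, i (Fin.last m) = i k.castSucc := by
      rintro ⟨k, hk⟩
      rcases hdist _ _ hk with h' | ⟨h', -⟩ | ⟨h', -⟩
      · exact (Fin.castSucc_lt_last k).ne' h'
      · exact last_ne_zero hm h'
      · exact hne (by rw [hk, ← h'])
    rw [hμ'def]; unfold augMatch
    rw [dif_neg hnex, if_pos rfl]
  have hout : ∀ j, (∀ k, j ≠ i k) → μ' j = μ j := by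
    intro j hj
    have hnex : ¬ ∃ k : Fin m, j = i k.castSucc := by
      rintro ⟨k, hk⟩; exact hj _ hk
    rw [hμ'def]; unfold augMatch
    rw [dif_neg hnex, if_neg (hj _)]
  have haug : Augments μ μ' i c := ⟨hmat', hnone, hout⟩
  -- Validity of μ'
  have hcomp' : Complies E μ' := by
    intro j c0 hjc
    rw [hμ'def] at hjc; unfold augMatch at hjc
    by_cases hex : ∃ k : Fin m, j = i k.castSucc
    · rw [dif_pos hex] at hjc
      have hc : c hex.choose = c0 := Option.some_injective _ hjc
      rw [hex.choose_spec, ← hc]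
      exact helig hex.choose
    · rw [dif_neg hex] at hjc
      by_cases hlast : j = i (Fin.last m)
      · rw [if_pos hlast] at hjc; exact absurd hjc (by simp)
      · rw [if_neg hlast] at hjc; exact hμ.2 j c0 hjc
  -- counting
  have hcount := fun p => chain_count (i := i) (c := c) hm μ μ' h0 hmat hmat' hnone hout hdist p
  have hmc : ∀ c0, matchCount μ' c0 = matchCount μ c0 := by
    intro c0
    have h := hcount (fun _ c' => c' = c0)
    simp only [exists_eq_right] at h
    unfold matchCount
    omega
  have hcard : matchedCard μ' = matchedCard μ := by
    have h := hcount (fun _ _ => True)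
    simp only [and_true] at h
    unfold matchedCard
    simp only [Ne, Option.ne_none_iff_exists', eq_comm (a := none)] at *
    omega
  have hbenef : benefCard B μ < benefCard B μ' := by
    have h : (Finset.univ.filter fun j => ∃ c0, μ' j = some c0 ∧ j ∈ B c0).card
          + (Finset.univ.filter fun k : Fin m => i k.succ ∈ B (c k)).card
        = (Finset.univ.filter fun j => ∃ c0, μ j = some c0 ∧ j ∈ B c0).card
          + (Finset.univ.filter fun k : Fin m => i k.castSucc ∈ B (c k)).card := by
      convert hcount (fun j c' => j ∈ B c') using 3 <;>
        exact filter_irrel _ _ _ _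
    unfold potential at hΦ
    unfold benefCard
    omega
  have hcaps' : Caps r μ' := fun c0 => (hmc c0).le.trans (hμ.1 c0)
  have hvalid' : Valid r E μ' := ⟨hcaps', hcomp'⟩
  refine ⟨⟨μ', haug, hvalid', hcard, hbenef⟩, ?_⟩
  rintro ⟨⟨hvμ, hmaxres⟩, hbmax⟩
  have hmr' : MaxRes r E μ' := by
    refine ⟨hvalid', fun μ'' h'' => ?_⟩
    rw [hcard]
    exact hmaxres μ'' h''
  exact absurd (hbmax μ' hmr') (not_le.mpr hbenef)
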